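/- arXiv:1708.07821 — 6 statements merged into one kernel-verified Lean document; each statement's English description precedes it below -/
import Mathlib

section
/- Let A ∈ ℝ^{n×d} satisfy AᵀA = I and ‖Aᵢ‖₂² ≤ C·d/n for every row i (for some constant C > 0), let b ∈ ℝⁿ, and let x* minimize x ↦ ‖Ax − b‖₁ over ℝᵈ. Then with x₀ = Aᵀb one has ‖x₀ − x*‖₂² ≤ (C·d/n)·‖Ax* − b‖₁². -/
open Matrix Finset

/-- The ℓ1 norm of a vector in ℝ^m. -/
noncomputable def l1norm {m : ℕ} (v : Fin m → ℝ) : ℝ := ∑ i, |v i|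

/-- The ℓ2 norm of a vector in ℝ^m. -/
noncomputable def l2norm {m : ℕ} (v : Fin m → ℝ) : ℝ := Real.sqrt (∑ i, (v i) ^ 2)

lemma l2norm_eq_norm {m : ℕ} (v : Fin m → ℝ) :
    l2norm v = ‖(WithLp.equiv 2 (Fin m → ℝ)).symm v‖ := by
  rw [EuclideanSpace.norm_eq]
  simp [l2norm, sq_abs]

lemma l2norm_nonneg {m : ℕ} (v : Fin m → ℝ) : 0 ≤ l2norm v :=
  Real.sqrt_nonneg _

/-- If `A` is isotropic (`AᵀA = I`) and row-bounded (`‖Aᵢ‖₂² ≤ C·d/n`), and `x*` minimizes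
`‖Ax − b‖₁`, then the initialization `x₀ = Aᵀ b` satisfies
`‖x₀ − x*‖₂² ≤ (C·d/n)·‖Ax* − b‖₁²`. -/
theorem stmt1 {n d : ℕ} (A : Matrix (Fin n) (Fin d) ℝ) (b : Fin n → ℝ)
    (C : ℝ) (hC : 0 < C)
    (hiso : Aᵀ * A = 1)
    (hrow : ∀ i, (l2norm (A i)) ^ 2 ≤ C * d / n)
    (xstar : Fin d → ℝ)
    (hxstar : ∀ x : Fin d → ℝ, l1norm (A.mulVec xstar - b) ≤ l1norm (A.mulVec x - b)) :
    (l2norm (Aᵀ.mulVec b - xstar)) ^ 2 ≤ (C * d / n) * (l1norm (A.mulVec xstar - b)) ^ 2 := by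
  set r : Fin n → ℝ := b - A.mulVec xstar with hr
  have hcd : (0:ℝ) ≤ C * d / n := by positivity
  -- rewrite the difference as Aᵀ r
  have hx : Aᵀ.mulVec (A.mulVec xstar) = xstar := by
    rw [Matrix.mulVec_mulVec, hiso, Matrix.one_mulVec]
  have hdiff : Aᵀ.mulVec b - xstar = ∑ i, r i • A i := by
    conv_lhs => rw [← hx, ← Matrix.mulVec_sub, ← hr]
    funext j
    simp only [Matrix.mulVec, dotProduct, Matrix.transpose_apply, Finset.sum_apply,
      Pi.smul_apply, smul_eq_mul]
    exact Finset.sum_congr rfl fun i _ => mul_comm _ _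
  -- l1 norm of residual
  have hl1 : l1norm (A.mulVec xstar - b) = ∑ i, |r i| := by
    unfold l1norm
    refine Finset.sum_congr rfl fun i _ => ?_
    rw [hr]
    simp [abs_sub_comm]
  set L : ℝ := ∑ i, |r i| with hL
  have hLnn : 0 ≤ L := Finset.sum_nonneg fun i _ => abs_nonneg _
  set s : ℝ := Real.sqrt (C * d / n) with hs
  -- bound the l2 norm
  have hrowle : ∀ i, l2norm (A i) ≤ s := fun i =>
    Real.le_sqrt (l2norm_nonneg _) hcd |>.mpr (hrow i)
  have hle : l2norm (Aᵀ.mulVec b - xstar) ≤ s * L := by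
    rw [hdiff, l2norm_eq_norm]
    have : (WithLp.equiv 2 (Fin d → ℝ)).symm (∑ i, r i • A i)
        = ∑ i, r i • (WithLp.equiv 2 (Fin d → ℝ)).symm (A i) := by
      change (WithLp.linearEquiv 2 ℝ (Fin d → ℝ)).symm _
        = ∑ i, r i • (WithLp.linearEquiv 2 ℝ (Fin d → ℝ)).symm (A i)
      rw [map_sum]; simp_rw [map_smul]
    rw [this]
    calc ‖∑ i, r i • (WithLp.equiv 2 (Fin d → ℝ)).symm (A i)‖
        ≤ ∑ i, ‖r i • (WithLp.equiv 2 (Fin d → ℝ)).symm (A i)‖ := norm_sum_le _ _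
      _ ≤ ∑ i, |r i| * s := by
          refine Finset.sum_le_sum fun i _ => ?_
          rw [norm_smul, Real.norm_eq_abs, ← l2norm_eq_norm]
          exact mul_le_mul_of_nonneg_left (hrowle i) (abs_nonneg _)
      _ = s * L := by rw [← Finset.sum_mul, mul_comm]
  calc (l2norm (Aᵀ.mulVec b - xstar)) ^ 2 ≤ (s * L) ^ 2 :=
        pow_le_pow_left₀ (l2norm_nonneg _) hle 2
    _ = (C * d / n) * L ^ 2 := by
        rw [mul_pow, hs, Real.sq_sqrt hcd]
    _ = (C * d / n) * (l1norm (A.mulVec xstar - b)) ^ 2 := by rw [hl1]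
end

section
/- Let A ∈ ℝ^{n×d}, b ∈ ℝⁿ, Ã ∈ ℝ^{N×d}, b̃ ∈ ℝ^N, let U ∈ ℝ^{d×d} be invertible, and let ε, δ > 0. Suppose ‖[Ã b̃]y‖₁ ≈_{1+ε} ‖[A b]y‖₁ for all y ∈ ℝ^{d+1}. Let x̃_U* minimize x ↦ ‖ÃUx − b̃‖₁, let x* minimize x ↦ ‖Ax − b‖₁, and let x̃ ∈ ℝᵈ satisfy ‖ÃUx̃ − b̃‖₁ ≤ (1+δ)‖ÃUx̃_U* − b̃‖₁. Then ‖A(Ux̃) − b‖₁ ≤ (1+ε)²(1+δ)·‖Ax* − b‖₁. -/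
open Matrix Finset

/-- `[A b]`: the matrix obtained from `A` by appending `b` as a last column. -/
def appendCol {n d : ℕ} (A : Matrix (Fin n) (Fin d) ℝ) (b : Fin n → ℝ) :
    Matrix (Fin n) (Fin (d + 1)) ℝ :=
  Matrix.of fun i => Fin.snoc (A i) (b i)

/-- `a ≈_κ c`, i.e. `(1/κ)·c ≤ a ≤ κ·c`. -/
def approx (κ a c : ℝ) : Prop := (1 / κ) * c ≤ a ∧ a ≤ κ * c

lemma appendCol_snoc {n d : ℕ} (A : Matrix (Fin n) (Fin d) ℝ) (b : Fin n → ℝ)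
    (x : Fin d → ℝ) :
    (appendCol A b).mulVec (Fin.snoc x (-1)) = A.mulVec x - b := by
  funext i
  simp only [Matrix.mulVec, dotProduct, appendCol, Matrix.of_apply]
  rw [Fin.sum_univ_castSucc]
  simp [Fin.snoc_castSucc, Fin.snoc_last, Matrix.mulVec, dotProduct, sub_eq_add_neg,
    mul_comm]

/-- If `‖[Ã b̃]y‖₁ ≈_{1+ε} ‖[A b]y‖₁` for all `y`, `x̃_U*` minimizes `‖ÃUx − b̃‖₁`,
`x*` minimizes `‖Ax − b‖₁`, and `x̃` satisfies
`‖ÃUx̃ − b̃‖₁ ≤ (1+δ)‖ÃUx̃_U* − b̃‖₁`, then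
`‖A(Ux̃) − b‖₁ ≤ (1+ε)²(1+δ)‖Ax* − b‖₁`. -/
theorem stmt7 {n N d : ℕ} (A : Matrix (Fin n) (Fin d) ℝ) (b : Fin n → ℝ)
    (At : Matrix (Fin N) (Fin d) ℝ) (bt : Fin N → ℝ)
    (U : Matrix (Fin d) (Fin d) ℝ) (hU : IsUnit U)
    (ε δ : ℝ) (hε : 0 < ε) (hδ : 0 < δ)
    (happrox : ∀ y : Fin (d + 1) → ℝ,
      approx (1 + ε) (l1norm ((appendCol At bt).mulVec y)) (l1norm ((appendCol A b).mulVec y)))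
    (xtU xstar xt : Fin d → ℝ)
    (hxtU : ∀ x : Fin d → ℝ,
      l1norm ((At * U).mulVec xtU - bt) ≤ l1norm ((At * U).mulVec x - bt))
    (hxstar : ∀ x : Fin d → ℝ,
      l1norm (A.mulVec xstar - b) ≤ l1norm (A.mulVec x - b))
    (hxt : l1norm ((At * U).mulVec xt - bt) ≤ (1 + δ) * l1norm ((At * U).mulVec xtU - bt)) :
    l1norm (A.mulVec (U.mulVec xt) - b)
      ≤ (1 + ε) ^ 2 * (1 + δ) * l1norm (A.mulVec xstar - b) := by
  have hε1 : (0:ℝ) < 1 + ε := by linarith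
  have hδ1 : (0:ℝ) < 1 + δ := by linarith
  -- key: original ≤ (1+ε) * sketch, sketch ≤ (1+ε) * original
  have key1 : ∀ x : Fin d → ℝ, l1norm (A.mulVec x - b) ≤ (1+ε) * l1norm (At.mulVec x - bt) := by
    intro x
    have h := (happrox (Fin.snoc x (-1))).1
    rw [appendCol_snoc, appendCol_snoc] at h
    rw [div_mul_eq_mul_div, one_mul, div_le_iff₀ hε1] at h
    linarith [h]
  have key2 : ∀ x : Fin d → ℝ, l1norm (At.mulVec x - bt) ≤ (1+ε) * l1norm (A.mulVec x - b) := by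
    intro x
    have h := (happrox (Fin.snoc x (-1))).2
    rwa [appendCol_snoc, appendCol_snoc] at h
  have hmv : ∀ x : Fin d → ℝ, (At * U).mulVec x = At.mulVec (U.mulVec x) := fun x =>
    (Matrix.mulVec_mulVec x At U).symm
  obtain ⟨w, hV⟩ : ∃ w : Fin d → ℝ, U.mulVec w = xstar := by
    refine ⟨U⁻¹.mulVec xstar, ?_⟩
    rw [Matrix.mulVec_mulVec, Matrix.mul_nonsing_inv _ ((Matrix.isUnit_iff_isUnit_det U).mp hU),
      Matrix.one_mulVec]
  calc l1norm (A.mulVec (U.mulVec xt) - b)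
      ≤ (1+ε) * l1norm (At.mulVec (U.mulVec xt) - bt) := key1 _
    _ = (1+ε) * l1norm ((At * U).mulVec xt - bt) := by rw [hmv]
    _ ≤ (1+ε) * ((1+δ) * l1norm ((At * U).mulVec xtU - bt)) := by
        exact mul_le_mul_of_nonneg_left hxt (le_of_lt hε1)
    _ ≤ (1+ε) * ((1+δ) * l1norm ((At * U).mulVec (w) - bt)) := by
        have h := hxtU w
        nlinarith [h, mul_pos hε1 hδ1]
    _ = (1+ε) * ((1+δ) * l1norm (At.mulVec xstar - bt)) := by rw [hmv, hV]
    _ ≤ (1+ε) * ((1+δ) * ((1+ε) * l1norm (A.mulVec xstar - b))) := by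
        have h := key2 xstar
        nlinarith [h, mul_pos hε1 hδ1]
    _ = (1 + ε) ^ 2 * (1 + δ) * l1norm (A.mulVec xstar - b) := by ring
end

section
/- Let A ∈ ℝ^{n×d} satisfy (1/κ)I ⪯ AᵀA ⪯ κI for some κ ≥ 1, and ‖Aᵢ‖₂² ≤ C·d/n for every row i (some constant C > 0). Let b ∈ ℝⁿ, let x₀ = (AᵀA)⁻¹Aᵀb be the ℓ2 minimizer of x ↦ ‖Ax − b‖₂, and let x* minimize x ↦ ‖Ax − b‖₁. Then ‖x₀ − x*‖₂ ≤ κ·√(C·d/n)·‖Ax* − b‖₁. -/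
open Matrix Finset

/-- The Loewner order: `M ⪯ N` iff `N − M` is positive semidefinite. -/
def loewnerLE {d : ℕ} (M N : Matrix (Fin d) (Fin d) ℝ) : Prop := (N - M).PosSemidef

lemma l2norm_sum_le {m k : ℕ} (F : Fin k → (Fin m → ℝ)) :
    l2norm (∑ i, F i) ≤ ∑ i, l2norm (F i) := by
  simp only [l2norm_eq_norm]
  have : (WithLp.equiv 2 (Fin m → ℝ)).symm (∑ i, F i)
      = ∑ i, (WithLp.equiv 2 (Fin m → ℝ)).symm (F i) := WithLp.toLp_sum (p := 2) (s := Finset.univ) (f := F)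
  rw [this]
  exact norm_sum_le _ _

lemma l2norm_smul {m : ℕ} (c : ℝ) (v : Fin m → ℝ) :
    l2norm (c • v) = |c| * l2norm v := by
  simp only [l2norm_eq_norm]
  have : (WithLp.equiv 2 (Fin m → ℝ)).symm (c • v)
      = c • (WithLp.equiv 2 (Fin m → ℝ)).symm v := rfl
  rw [this, norm_smul, Real.norm_eq_abs]

/-- If `(1/κ)I ⪯ AᵀA ⪯ κI` and `‖Aᵢ‖₂² ≤ C·d/n` for every row, `x₀ = (AᵀA)⁻¹Aᵀb`
is the ℓ2 minimizer, and `x*` minimizes `‖Ax − b‖₁`, then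
`‖x₀ − x*‖₂ ≤ κ·√(C·d/n)·‖Ax* − b‖₁`. -/
theorem stmt9 {n d : ℕ} (A : Matrix (Fin n) (Fin d) ℝ) (b : Fin n → ℝ)
    (κ C : ℝ) (hκ : 1 ≤ κ) (hC : 0 < C)
    (hlo : loewnerLE ((1 / κ) • (1 : Matrix (Fin d) (Fin d) ℝ)) (Aᵀ * A))
    (hhi : loewnerLE (Aᵀ * A) (κ • (1 : Matrix (Fin d) (Fin d) ℝ)))
    (hrow : ∀ i, (l2norm (A i)) ^ 2 ≤ C * d / n)
    (x0 : Fin d → ℝ) (hx0 : x0 = ((Aᵀ * A)⁻¹ * Aᵀ).mulVec b)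
    (xstar : Fin d → ℝ)
    (hxstar : ∀ x : Fin d → ℝ, l1norm (A.mulVec xstar - b) ≤ l1norm (A.mulVec x - b)) :
    l2norm (x0 - xstar) ≤ κ * Real.sqrt (C * d / n) * l1norm (A.mulVec xstar - b) := by
  have hκ0 : 0 < κ := lt_of_lt_of_le one_pos hκ
  set M := Aᵀ * A with hM
  set r := b - A.mulVec xstar with hr
  set w := x0 - xstar with hw
  set v := Aᵀ.mulVec r with hv
  -- M is positive definite
  have hMpd : M.PosDef := by
    refine .of_dotProduct_mulVec_pos (by simpa using isHermitian_conjTranspose_mul_self A) fun x hx => ?_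
    have h0 := PosSemidef.dotProduct_mulVec_nonneg hlo x
    have hxx : 0 < dotProduct (star x) x := dotProduct_star_self_pos_iff.mpr hx
    simp only [star_trivial] at h0 hxx ⊢
    rw [sub_mulVec, dotProduct_sub] at h0
    have : dotProduct x (((1 / κ) • (1 : Matrix (Fin d) (Fin d) ℝ)).mulVec x)
        = (1 / κ) * dotProduct x x := by
      rw [smul_mulVec, one_mulVec, dotProduct_smul, smul_eq_mul]
    rw [this] at h0
    have : 0 < (1 / κ) * dotProduct x x := by positivity
    linarith
  have hdet : IsUnit M.det := hMpd.det_pos.ne'.isUnit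
  -- key identity : M *ᵥ w = v
  have hMw : M.mulVec w = v := by
    rw [hw, hx0, hv, hr, mulVec_sub, mulVec_sub, mulVec_mulVec, ← Matrix.mul_assoc,
      Matrix.mul_nonsing_inv M hdet, Matrix.one_mul, ← mulVec_mulVec]
  -- quadratic bound : l2norm w ≤ κ * l2norm v
  have step1 : l2norm w ≤ κ * l2norm v := by
    have h0 := PosSemidef.dotProduct_mulVec_nonneg hlo w
    simp only [star_trivial, sub_mulVec, dotProduct_sub, smul_mulVec, one_mulVec,
      dotProduct_smul, smul_eq_mul, hMw] at h0
    have hww : dotProduct w w = ∑ j, (w j) ^ 2 := by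
      simp [dotProduct, sq]
    have hwv : dotProduct w v ≤ l2norm w * l2norm v := by
      have hcs := sum_mul_sq_le_sq_mul_sq Finset.univ w v
      have : dotProduct w v ≤ |∑ j, w j * v j| := by
        rw [dotProduct]; exact le_abs_self _
      refine this.trans ?_
      rw [← Real.sqrt_sq_eq_abs, l2norm, l2norm, ← Real.sqrt_mul (by positivity)]
      exact Real.sqrt_le_sqrt hcs
    have hS : (1 / κ) * (l2norm w) ^ 2 ≤ l2norm w * l2norm v := by
      have hsq : (l2norm w) ^ 2 = ∑ j, (w j) ^ 2 := by
        rw [l2norm, Real.sq_sqrt (by positivity)]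
      rw [hsq]
      calc (1 / κ) * ∑ j, (w j) ^ 2 = (1 / κ) * dotProduct w w := by rw [hww]
        _ ≤ dotProduct w v := by linarith
        _ ≤ l2norm w * l2norm v := hwv
    have hS2 : (l2norm w) ^ 2 ≤ κ * (l2norm w * l2norm v) := by
      have h2 := mul_le_mul_of_nonneg_left hS (le_of_lt hκ0)
      rwa [← mul_assoc, mul_one_div_cancel hκ0.ne', one_mul] at h2
    rcases eq_or_lt_of_le (l2norm_nonneg w) with h | h
    · rw [← h]; exact mul_nonneg hκ0.le (l2norm_nonneg v)
    · nlinarith [hS2, h]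
  -- bound l2norm v
  have hsq : ∀ i, l2norm (A i) ≤ Real.sqrt (C * d / n) := by
    intro i
    have := hrow i
    calc l2norm (A i) = Real.sqrt ((l2norm (A i)) ^ 2) := by
          rw [Real.sqrt_sq (l2norm_nonneg _)]
      _ ≤ Real.sqrt (C * d / n) := Real.sqrt_le_sqrt this
  have hvsum : v = ∑ i, r i • A i := by
    funext j
    simp only [hv, mulVec, dotProduct, transpose_apply, Finset.sum_apply, Pi.smul_apply,
      smul_eq_mul]
    exact Finset.sum_congr rfl fun i _ => mul_comm _ _
  have step2 : l2norm v ≤ Real.sqrt (C * d / n) * l1norm r := by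
    rw [hvsum]
    calc l2norm (∑ i, r i • A i) ≤ ∑ i, l2norm (r i • A i) := l2norm_sum_le _
      _ = ∑ i, |r i| * l2norm (A i) := by simp [l2norm_smul]
      _ ≤ ∑ i, |r i| * Real.sqrt (C * d / n) := by
          refine Finset.sum_le_sum fun i _ => ?_
          exact mul_le_mul_of_nonneg_left (hsq i) (abs_nonneg _)
      _ = Real.sqrt (C * d / n) * l1norm r := by
          rw [l1norm, ← Finset.sum_mul, mul_comm]
  have hl1 : l1norm r = l1norm (A.mulVec xstar - b) := by
    unfold l1norm
    exact Finset.sum_congr rfl fun i _ => by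
      simp [hr, abs_sub_comm]
  calc l2norm w ≤ κ * l2norm v := step1
    _ ≤ κ * (Real.sqrt (C * d / n) * l1norm r) :=
        mul_le_mul_of_nonneg_left step2 (le_of_lt hκ0)
    _ = κ * Real.sqrt (C * d / n) * l1norm (A.mulVec xstar - b) := by rw [hl1, mul_assoc]
end

section
/- Let A ∈ ℝ^{n×d} satisfy (1/κ)I ⪯ AᵀA ⪯ κI for some κ ≥ 1, and ‖Aᵢ‖₂² ≤ C·d/n for every row i (some constant C > 0). Let b ∈ ℝⁿ, let x₀ = (AᵀA)⁻¹Aᵀb be the ℓ2 minimizer of x ↦ ‖Ax − b‖₂, let x* minimize x ↦ ‖Ax − b‖₁, and let x̃₀ ∈ ℝᵈ satisfy ‖x̃₀ − x₀‖₂ ≤ √(d/n)·‖Ax₀ − b‖₂. Then ‖x̃₀ − x*‖₂ ≤ (1 + κ√C)·√(d/n)·‖Ax* − b‖₁. -/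
open Matrix Finset

noncomputable def evv {m : ℕ} (v : Fin m → ℝ) : EuclideanSpace ℝ (Fin m) :=
  (WithLp.equiv 2 (Fin m → ℝ)).symm v

lemma l2norm_eq {m : ℕ} (v : Fin m → ℝ) : l2norm v = ‖evv v‖ := by
  rw [EuclideanSpace.norm_eq]
  simp [l2norm, evv, sq_abs]

lemma l1norm_nonneg {m : ℕ} (v : Fin m → ℝ) : 0 ≤ l1norm v :=
  Finset.sum_nonneg fun i _ => abs_nonneg _

lemma l2norm_le_l1norm {m : ℕ} (v : Fin m → ℝ) : l2norm v ≤ l1norm v := by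
  have h : ∑ i, (v i) ^ 2 ≤ (∑ i, |v i|) ^ 2 := by
    have := Finset.sum_sq_le_sq_sum_of_nonneg (s := Finset.univ)
      (f := fun i => |v i|) (fun i _ => abs_nonneg _)
    simpa [sq_abs] using this
  rw [l2norm, l1norm]
  calc Real.sqrt (∑ i, (v i) ^ 2) ≤ Real.sqrt ((∑ i, |v i|) ^ 2) := Real.sqrt_le_sqrt h
  _ = ∑ i, |v i| := Real.sqrt_sq (Finset.sum_nonneg fun i _ => abs_nonneg _)


lemma sum_mul_le_l2 {m : ℕ} (u w : Fin m → ℝ) : ∑ i, u i * w i ≤ l2norm u * l2norm w := by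
  rw [l2norm_eq, l2norm_eq]
  have h := real_inner_le_norm (evv u) (evv w)
  simpa [evv, PiLp.inner_apply, RCLike.inner_apply, conj_trivial, mul_comm] using h

lemma l2norm_transpose_mulVec_le {n d : ℕ} (A : Matrix (Fin n) (Fin d) ℝ) (r : Fin n → ℝ) :
    l2norm (Aᵀ *ᵥ r) ≤ ∑ i, |r i| * l2norm (A i) := by
  rw [l2norm_eq]
  have hev : evv (Aᵀ *ᵥ r) = ∑ i, r i • evv (A i) := by
    ext j
    rw [show (∑ i, r i • evv (A i)) j = ∑ i, (r i • evv (A i)) j from by rw [WithLp.ofLp_sum, Finset.sum_apply]]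
    simp [evv, Matrix.mulVec, dotProduct, Matrix.transpose_apply, mul_comm]
  rw [hev]
  calc ‖∑ i, r i • evv (A i)‖ ≤ ∑ i, ‖r i • evv (A i)‖ := norm_sum_le _ _
  _ = ∑ i, |r i| * l2norm (A i) := by
      refine Finset.sum_congr rfl fun i _ => ?_
      rw [norm_smul, Real.norm_eq_abs, l2norm_eq]

/-- If `(1/κ)I ⪯ AᵀA ⪯ κI`, rows satisfy `‖Aᵢ‖₂² ≤ C·d/n`, `x₀ = (AᵀA)⁻¹Aᵀb` is the
ℓ2 minimizer, `x*` minimizes `‖Ax − b‖₁`, and `x̃₀` satisfies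
`‖x̃₀ − x₀‖₂ ≤ √(d/n)·‖Ax₀ − b‖₂`, then
`‖x̃₀ − x*‖₂ ≤ (1 + κ√C)·√(d/n)·‖Ax* − b‖₁`. -/
theorem stmt10 {n d : ℕ} (A : Matrix (Fin n) (Fin d) ℝ) (b : Fin n → ℝ)
    (κ C : ℝ) (hκ : 1 ≤ κ) (hC : 0 < C)
    (hlo : loewnerLE ((1 / κ) • (1 : Matrix (Fin d) (Fin d) ℝ)) (Aᵀ * A))
    (hhi : loewnerLE (Aᵀ * A) (κ • (1 : Matrix (Fin d) (Fin d) ℝ)))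
    (hrow : ∀ i, (l2norm (A i)) ^ 2 ≤ C * d / n)
    (x0 : Fin d → ℝ) (hx0 : x0 = ((Aᵀ * A)⁻¹ * Aᵀ).mulVec b)
    (xstar : Fin d → ℝ)
    (hxstar : ∀ x : Fin d → ℝ, l1norm (A.mulVec xstar - b) ≤ l1norm (A.mulVec x - b))
    (xt0 : Fin d → ℝ)
    (hxt0 : l2norm (xt0 - x0) ≤ Real.sqrt ((d : ℝ) / n) * l2norm (A.mulVec x0 - b)) :
    l2norm (xt0 - xstar)
      ≤ (1 + κ * Real.sqrt C) * Real.sqrt ((d : ℝ) / n) * l1norm (A.mulVec xstar - b) := by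
    classical
  have hκ0 : (0:ℝ) < κ := lt_of_lt_of_le one_pos hκ
  set G := Aᵀ * A with hGdef
  set L1 := l1norm (A.mulVec xstar - b) with hL1
  have hL1nn : 0 ≤ L1 := l1norm_nonneg _
  have hsq : ∀ {m : ℕ} (v : Fin m → ℝ), (l2norm v)^2 = ∑ i, v i ^ 2 := by
    intro m v
    rw [l2norm, Real.sq_sqrt (Finset.sum_nonneg fun i _ => sq_nonneg _)]
  -- quadratic lower bound from hlo
  have hquad : ∀ v : Fin d → ℝ, (1/κ) * ((l2norm v)^2) ≤ ∑ i, v i * (G *ᵥ v) i := by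
    intro v
    have h := hlo.dotProduct_mulVec_nonneg v
    simp only [Matrix.sub_mulVec, dotProduct_sub, Matrix.smul_mulVec,
      Matrix.one_mulVec, star_trivial, dotProduct_smul, smul_eq_mul] at h
    have h1 : dotProduct v v = ∑ i, v i ^ 2 := by
      simp [dotProduct, pow_two]
    have h2 : dotProduct v (G *ᵥ v) = ∑ i, v i * (G *ᵥ v) i := rfl
    rw [hsq v]
    rw [h1, h2] at h
    linarith
  -- G is positive definite
  have hGpd : G.PosDef := by
    refine Matrix.PosDef.of_dotProduct_mulVec_pos (by simpa using Matrix.isHermitian_conjTranspose_mul_self A) fun v hv => ?_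
    have hvpos : 0 < ∑ i, v i ^ 2 := by
      obtain ⟨i, hi⟩ := Function.ne_iff.mp hv
      exact Finset.sum_pos' (fun j _ => sq_nonneg _)
        ⟨i, Finset.mem_univ i, pow_two_pos_of_ne_zero hi⟩
    have := hquad v
    rw [hsq v] at this
    have h0 : 0 < (1/κ) * (∑ i, v i ^ 2) := mul_pos (by positivity) hvpos
    have : (0:ℝ) < ∑ i, v i * (G *ᵥ v) i := lt_of_lt_of_le h0 this
    simpa [star_trivial, dotProduct] using this
  have hinv : G * G⁻¹ = 1 := Matrix.mul_nonsing_inv _ hGpd.det_pos.ne'.isUnit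
  -- normal equations
  have hnormal : G *ᵥ x0 = Aᵀ *ᵥ b := by
    rw [hx0, Matrix.mulVec_mulVec, ← Matrix.mul_assoc, hinv, Matrix.one_mul]
  have hAtr0 : Aᵀ *ᵥ (A *ᵥ x0 - b) = 0 := by
    rw [Matrix.mulVec_sub, Matrix.mulVec_mulVec, ← hGdef, hnormal, sub_self]
  -- x0 is the ℓ2 minimizer
  have hmin : l2norm (A *ᵥ x0 - b) ≤ l2norm (A *ᵥ xstar - b) := by
    rw [l2norm, l2norm]
    apply Real.sqrt_le_sqrt
    have hdecomp : A *ᵥ xstar - b = A *ᵥ (xstar - x0) + (A *ᵥ x0 - b) := by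
      rw [Matrix.mulVec_sub]; abel
    have hcross : ∑ i, (A *ᵥ (xstar - x0)) i * (A *ᵥ x0 - b) i = 0 := by
      have hdp : dotProduct (A *ᵥ (xstar - x0)) (A *ᵥ x0 - b)
          = dotProduct (xstar - x0) (Aᵀ *ᵥ (A *ᵥ x0 - b)) := by
        rw [← Matrix.transpose_transpose A, Matrix.mulVec_transpose,
          Matrix.dotProduct_mulVec, Matrix.transpose_transpose]
      have : dotProduct (A *ᵥ (xstar - x0)) (A *ᵥ x0 - b) = 0 := by
        rw [hdp, hAtr0, dotProduct_zero]
      simpa [dotProduct] using this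
    have key : ∑ i, ((A *ᵥ xstar - b) i)^2
        = (∑ i, ((A *ᵥ (xstar - x0)) i)^2) + ∑ i, ((A *ᵥ x0 - b) i)^2 := by
      rw [hdecomp]
      have hpt : ∀ i, ((A *ᵥ (xstar - x0) + (A *ᵥ x0 - b)) i)^2
          = ((A *ᵥ (xstar - x0)) i)^2
            + 2*((A *ᵥ (xstar - x0)) i * (A *ᵥ x0 - b) i) + ((A *ᵥ x0 - b) i)^2 := by
        intro i; simp only [Pi.add_apply]; ring
      rw [Finset.sum_congr rfl (fun i _ => hpt i), Finset.sum_add_distrib,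
        Finset.sum_add_distrib, ← Finset.mul_sum, hcross]
      ring
    have hnn : 0 ≤ ∑ i, ((A *ᵥ (xstar - x0)) i)^2 :=
      Finset.sum_nonneg fun i _ => sq_nonneg _
    linarith
  -- bound on rows
  have hrowle : ∀ i, l2norm (A i) ≤ Real.sqrt C * Real.sqrt ((d:ℝ)/n) := by
    intro i
    have h1 : l2norm (A i) ≤ Real.sqrt (C * d / n) := by
      rw [l2norm]
      apply Real.sqrt_le_sqrt
      have := hrow i
      rwa [hsq] at this
    calc l2norm (A i) ≤ Real.sqrt (C * d / n) := h1
    _ = Real.sqrt C * Real.sqrt ((d:ℝ)/n) := by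
        rw [mul_div_assoc, Real.sqrt_mul hC.le]
  -- bound on ‖x0 - xstar‖
  have hGv : G *ᵥ (x0 - xstar) = Aᵀ *ᵥ (b - A *ᵥ xstar) := by
    rw [Matrix.mulVec_sub, hnormal, Matrix.mulVec_sub, hGdef, ← Matrix.mulVec_mulVec]
  have hstep2 : l2norm (x0 - xstar) ≤ κ * (Real.sqrt C * Real.sqrt ((d:ℝ)/n) * L1) := by
    set v := x0 - xstar with hv
    have hGvbound : l2norm (G *ᵥ v) ≤ Real.sqrt C * Real.sqrt ((d:ℝ)/n) * L1 := by
      rw [hGv]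
      calc l2norm (Aᵀ *ᵥ (b - A *ᵥ xstar)) ≤ ∑ i, |(b - A *ᵥ xstar) i| * l2norm (A i) :=
            l2norm_transpose_mulVec_le A _
      _ ≤ ∑ i, |(b - A *ᵥ xstar) i| * (Real.sqrt C * Real.sqrt ((d:ℝ)/n)) := by
          refine Finset.sum_le_sum fun i _ => ?_
          exact mul_le_mul_of_nonneg_left (hrowle i) (abs_nonneg _)
      _ = Real.sqrt C * Real.sqrt ((d:ℝ)/n) * L1 := by
          rw [← Finset.sum_mul, hL1, l1norm]
          have : ∑ i, |(b - A *ᵥ xstar) i| = ∑ i, |(A *ᵥ xstar - b) i| := by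
            refine Finset.sum_congr rfl fun i _ => ?_
            simp [abs_sub_comm]
          rw [this]; ring
    have h1 := hquad v
    have h2 : ∑ i, v i * (G *ᵥ v) i ≤ l2norm v * l2norm (G *ᵥ v) := sum_mul_le_l2 _ _
    rcases eq_or_lt_of_le (l2norm_nonneg v) with h0 | h0
    · rw [← h0]
      positivity
    · have hA2 : (l2norm v)^2 ≤ κ * (l2norm v * l2norm (G *ᵥ v)) := by
        have h3 := mul_le_mul_of_nonneg_left (h1.trans h2) hκ0.le
        rwa [← mul_assoc, mul_one_div_cancel hκ0.ne', one_mul] at h3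
      have h4 : l2norm v ≤ κ * l2norm (G *ᵥ v) := by
        nlinarith [hA2, h0]
      calc l2norm v ≤ κ * l2norm (G *ᵥ v) := h4
      _ ≤ κ * (Real.sqrt C * Real.sqrt ((d:ℝ)/n) * L1) :=
          mul_le_mul_of_nonneg_left hGvbound hκ0.le
  -- triangle inequality and conclusion
  have htri : l2norm (xt0 - xstar) ≤ l2norm (xt0 - x0) + l2norm (x0 - xstar) := by
    rw [l2norm_eq, l2norm_eq, l2norm_eq]
    have heq : evv (xt0 - xstar) = evv (xt0 - x0) + evv (x0 - xstar) := by
      ext j; simp [evv]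
    rw [heq]
    exact norm_add_le _ _
  have hstep1 : l2norm (xt0 - x0) ≤ Real.sqrt ((d:ℝ)/n) * L1 := by
    calc l2norm (xt0 - x0) ≤ Real.sqrt ((d:ℝ)/n) * l2norm (A.mulVec x0 - b) := hxt0
    _ ≤ Real.sqrt ((d:ℝ)/n) * l2norm (A.mulVec xstar - b) :=
        mul_le_mul_of_nonneg_left hmin (Real.sqrt_nonneg _)
    _ ≤ Real.sqrt ((d:ℝ)/n) * L1 :=
        mul_le_mul_of_nonneg_left (l2norm_le_l1norm _) (Real.sqrt_nonneg _)
  have hexpand : (1 + κ * Real.sqrt C) * Real.sqrt ((d:ℝ)/n) * L1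
      = Real.sqrt ((d:ℝ)/n) * L1 + κ * (Real.sqrt C * Real.sqrt ((d:ℝ)/n) * L1) := by
    ring
  rw [hexpand]
  linarith
end

section
/- Let A ∈ ℝ^{n×d} have full column rank and satisfy (1/κ)I ⪯ AᵀA ⪯ κI and (1/κ)(d/n) ≤ ‖Aᵢ‖₂² ≤ κ(d/n) for every row i, for some κ ≥ 1. Let w ∈ ℝⁿ be strictly positive weights satisfying the ℓ1 Lewis-weight fixed-point equation wᵢ² = Aᵢ (AᵀW⁻¹A)⁻¹ Aᵢᵀ for all i, where W = diag(w). Then for every i, (1/κ²)(d/n) ≤ wᵢ ≤ κ²(d/n). -/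
open Matrix Finset

/-- Almost-uniform leverage scores imply almost-uniform ℓ1 Lewis weights:
if `(1/κ)I ⪯ AᵀA ⪯ κI` and `(1/κ)(d/n) ≤ ‖Aᵢ‖₂² ≤ κ(d/n)` for every row, and `w`
are strictly positive weights satisfying the Lewis-weight fixed point
`wᵢ² = Aᵢ(AᵀW⁻¹A)⁻¹Aᵢᵀ`, then `(1/κ²)(d/n) ≤ wᵢ ≤ κ²(d/n)` for all `i`. -/
theorem stmt12 {n d : ℕ} (A : Matrix (Fin n) (Fin d) ℝ)
    (hA : IsUnit (Aᵀ * A))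
    (κ : ℝ) (hκ : 1 ≤ κ)
    (hlo : loewnerLE ((1 / κ) • (1 : Matrix (Fin d) (Fin d) ℝ)) (Aᵀ * A))
    (hhi : loewnerLE (Aᵀ * A) (κ • (1 : Matrix (Fin d) (Fin d) ℝ)))
    (hrow : ∀ i, (1 / κ) * ((d : ℝ) / n) ≤ (l2norm (A i)) ^ 2 ∧
                 (l2norm (A i)) ^ 2 ≤ κ * ((d : ℝ) / n))
    (w : Fin n → ℝ) (hw : ∀ i, 0 < w i)
    (hlewis : ∀ i, (w i) ^ 2 =
      A i ⬝ᵥ ((Aᵀ * (Matrix.diagonal w)⁻¹ * A)⁻¹).mulVec (A i)) :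
    ∀ i, (1 / κ ^ 2) * ((d : ℝ) / n) ≤ w i ∧ w i ≤ κ ^ 2 * ((d : ℝ) / n) := by
  intro i
  have hκ0 : (0:ℝ) < κ := lt_of_lt_of_le one_pos hκ
  by_cases hd : d = 0
  · exfalso
    have h := hlewis i
    subst hd
    have : A i ⬝ᵥ ((Aᵀ * (Matrix.diagonal w)⁻¹ * A)⁻¹).mulVec (A i) = 0 := by
      simp [dotProduct]
    rw [this] at h
    nlinarith [hw i]
  have hd0 : (0:ℝ) < d := by
    exact_mod_cast Nat.pos_of_ne_zero hd
  have hn0 : (0:ℝ) < n := by exact_mod_cast i.pos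
  have hdn : (0:ℝ) < (d:ℝ)/n := div_pos hd0 hn0
  have hDinv : (Matrix.diagonal w)⁻¹ = Matrix.diagonal (fun k => (w k)⁻¹) := by
    apply Matrix.inv_eq_right_inv
    rw [Matrix.diagonal_mul_diagonal]
    have : (fun k => w k * (w k)⁻¹) = fun _ => (1:ℝ) :=
      funext fun k => mul_inv_cancel₀ (hw k).ne'
    rw [this, Matrix.diagonal_one]
  set M := Aᵀ * (Matrix.diagonal w)⁻¹ * A with hM
  -- quadratic form of M
  have hB : ∀ x y : Fin d → ℝ, x ⬝ᵥ M *ᵥ y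
      = ∑ k, (w k)⁻¹ * ((A *ᵥ x) k * (A *ᵥ y) k) := by
    intro x y
    rw [hM, hDinv, ← Matrix.mulVec_mulVec, ← Matrix.mulVec_mulVec,
      Matrix.dotProduct_mulVec, Matrix.vecMul_transpose]
    simp [dotProduct, Matrix.mulVec_diagonal, mul_comm, mul_assoc, mul_left_comm]
  -- quadratic form of AᵀA
  have hAA : ∀ x : Fin d → ℝ, x ⬝ᵥ (Aᵀ * A) *ᵥ x = ∑ k, (A *ᵥ x) k ^ 2 := by
    intro x
    rw [← Matrix.mulVec_mulVec, Matrix.dotProduct_mulVec, Matrix.vecMul_transpose]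
    simp [dotProduct, sq]
  have hxx : ∀ x : Fin d → ℝ, x ⬝ᵥ x = ∑ j, x j ^ 2 := by
    intro x; simp [dotProduct, sq]
  have hloQ : ∀ x : Fin d → ℝ, (1/κ) * (∑ j, x j ^ 2) ≤ ∑ k, (A *ᵥ x) k ^ 2 := by
    intro x
    have h := Matrix.PosSemidef.dotProduct_mulVec_nonneg hlo x
    simp only [star_trivial, Matrix.sub_mulVec, dotProduct_sub, Matrix.smul_mulVec,
      Matrix.one_mulVec, dotProduct_smul, smul_eq_mul] at h
    rw [hAA x, hxx x] at h
    linarith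
  have hhiQ : ∀ x : Fin d → ℝ, ∑ k, (A *ᵥ x) k ^ 2 ≤ κ * (∑ j, x j ^ 2) := by
    intro x
    have h := Matrix.PosSemidef.dotProduct_mulVec_nonneg hhi x
    simp only [star_trivial, Matrix.sub_mulVec, dotProduct_sub, Matrix.smul_mulVec,
      Matrix.one_mulVec, dotProduct_smul, smul_eq_mul] at h
    rw [hAA x, hxx x] at h
    linarith
  obtain ⟨jmax, -, hjmax⟩ := Finset.exists_max_image Finset.univ w ⟨i, Finset.mem_univ i⟩
  obtain ⟨jmin, -, hjmin⟩ := Finset.exists_min_image Finset.univ w ⟨i, Finset.mem_univ i⟩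
  have hjmax' : ∀ k, w k ≤ w jmax := fun k => hjmax k (Finset.mem_univ k)
  have hjmin' : ∀ k, w jmin ≤ w k := fun k => hjmin k (Finset.mem_univ k)
  have hkey : ∀ x : Fin d → ℝ, (w jmax)⁻¹ * (∑ k, (A *ᵥ x) k ^ 2)
      ≤ ∑ k, (w k)⁻¹ * ((A *ᵥ x) k * (A *ᵥ x) k) := by
    intro x
    rw [Finset.mul_sum]
    apply Finset.sum_le_sum
    intro k _
    rw [← sq]
    exact mul_le_mul_of_nonneg_right
      (inv_anti₀ (hw k) (hjmax' k)) (sq_nonneg _)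
  have hkey2 : ∀ x : Fin d → ℝ, ∑ k, (w k)⁻¹ * ((A *ᵥ x) k * (A *ᵥ x) k)
      ≤ (w jmin)⁻¹ * (∑ k, (A *ᵥ x) k ^ 2) := by
    intro x
    rw [Finset.mul_sum]
    apply Finset.sum_le_sum
    intro k _
    rw [← sq]
    exact mul_le_mul_of_nonneg_right
      (inv_anti₀ (hw jmin) (hjmin' k)) (sq_nonneg _)
  -- M is positive definite, hence invertible
  have hMpd : M.PosDef := by
    refine Matrix.PosDef.of_dotProduct_mulVec_pos ?_ ?_
    · rw [hM, hDinv, ← Matrix.conjTranspose_eq_transpose_of_trivial]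
      exact Matrix.isHermitian_conjTranspose_mul_mul A
        (Matrix.isHermitian_diagonal _)
    · intro x hx
      rw [star_trivial, hB x x]
      obtain ⟨j, hj⟩ := Function.ne_iff.mp hx
      have hj' : x j ≠ 0 := hj
      have hS1 : 0 < ∑ j, x j ^ 2 := by
        have h1 : x j ^ 2 ≤ ∑ j, x j ^ 2 :=
          Finset.single_le_sum (fun k _ => sq_nonneg (x k)) (Finset.mem_univ j)
        have : 0 < x j ^ 2 := by positivity
        linarith
      have h2 := hloQ x
      have h3 := hkey x
      have h4 : 0 < (w jmax)⁻¹ := inv_pos.2 (hw jmax)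
      calc (0:ℝ) < (w jmax)⁻¹ * (1/κ * ∑ j, x j ^ 2) :=
            mul_pos h4 (mul_pos (by positivity) hS1)
        _ ≤ (w jmax)⁻¹ * ∑ k, (A *ᵥ x) k ^ 2 :=
            mul_le_mul_of_nonneg_left h2 h4.le
        _ ≤ _ := h3
  have hMinv : M * M⁻¹ = 1 := Matrix.mul_nonsing_inv M hMpd.det_pos.ne'.isUnit
  -- upper bound
  have hupper : ∀ k, (w k) ^ 2 ≤ κ * w jmax * (l2norm (A k)) ^ 2 := by
    intro k
    set y := A k with hy
    set x := (M⁻¹) *ᵥ y with hx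
    have hMx : M *ᵥ x = y := by
      rw [hx, Matrix.mulVec_mulVec, hMinv, Matrix.one_mulVec]
    have hw2 : (w k) ^ 2 = y ⬝ᵥ x := hlewis k
    have hq : x ⬝ᵥ y = ∑ k', (w k')⁻¹ * ((A *ᵥ x) k' * (A *ᵥ x) k') := by
      rw [← hB x x, hMx]
    have hcomm : y ⬝ᵥ x = x ⬝ᵥ y := dotProduct_comm y x
    have hl2 : (l2norm y) ^ 2 = ∑ j, y j ^ 2 :=
      Real.sq_sqrt (Finset.sum_nonneg fun j _ => sq_nonneg _)
    have hCS : (y ⬝ᵥ x) ^ 2 ≤ (∑ j, y j ^ 2) * (∑ j, x j ^ 2) := by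
      simpa [dotProduct, sq] using
        Finset.sum_mul_sq_le_sq_mul_sq Finset.univ y x
    have h1 := hloQ x
    have h2 := hkey x
    have hwm : 0 < w jmax := hw jmax
    have hwk : 0 < w k := hw k
    -- S1 ≤ κ * wmax * (x ⬝ᵥ y)
    have hS1 : ∑ j, x j ^ 2 ≤ κ * w jmax * (x ⬝ᵥ y) := by
      have h3 : (w jmax)⁻¹ * (∑ k', (A *ᵥ x) k' ^ 2) ≤ x ⬝ᵥ y := by
        rw [hq]; exact hkey x
      have h4 : (1/κ) * (∑ j, x j ^ 2) ≤ ∑ k', (A *ᵥ x) k' ^ 2 := hloQ x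
      have h5 : (w jmax)⁻¹ * ((1/κ) * (∑ j, x j ^ 2)) ≤ x ⬝ᵥ y := by
        refine le_trans ?_ h3
        exact mul_le_mul_of_nonneg_left h4 (inv_pos.2 hwm).le
      have h6 := mul_le_mul_of_nonneg_left h5
        (by positivity : (0:ℝ) ≤ κ * w jmax)
      have h7 : κ * w jmax * ((w jmax)⁻¹ * (1 / κ * ∑ j, x j ^ 2))
          = ∑ j, x j ^ 2 := by field_simp
      linarith
    rw [hl2]
    nlinarith [hw2, hCS, hS1, sq_nonneg (w k), pow_pos hwk 2,
      Finset.sum_nonneg (fun j (_ : j ∈ Finset.univ) => sq_nonneg (y j))]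
  have hmax : w jmax ≤ κ ^ 2 * ((d:ℝ)/n) := by
    have h := hupper jmax
    have h2 := (hrow jmax).2
    have hwm := hw jmax
    nlinarith [mul_le_mul_of_nonneg_left h2 (by positivity : (0:ℝ) ≤ κ * w jmax)]
  have hlower : ∀ k, (w jmin) * (l2norm (A k)) ^ 2 ≤ κ * (w k) ^ 2 := by
    intro k
    set y := A k with hy
    set x := (M⁻¹) *ᵥ y with hx
    have hMx : M *ᵥ x = y := by
      rw [hx, Matrix.mulVec_mulVec, hMinv, Matrix.one_mulVec]
    have hw2 : (w k) ^ 2 = y ⬝ᵥ x := hlewis k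
    have hl2 : (l2norm y) ^ 2 = ∑ j, y j ^ 2 :=
      Real.sq_sqrt (Finset.sum_nonneg fun j _ => sq_nonneg _)
    have hS2pos : 0 < ∑ j, y j ^ 2 := by
      have h1 := (hrow k).1
      rw [hl2] at h1
      have h2 : 0 < 1/κ * ((d:ℝ)/n) := by positivity
      linarith
    have hS2eq : (∑ j, y j ^ 2) = ∑ k', (w k')⁻¹ * ((A *ᵥ y) k' * (A *ᵥ x) k') := by
      have h1 : (∑ j, y j ^ 2) = y ⬝ᵥ (M *ᵥ x) := by rw [hMx, hxx y]
      rw [h1, hB y x]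
    have hqx : (∑ k', (w k')⁻¹ * ((A *ᵥ x) k' * (A *ᵥ x) k')) = y ⬝ᵥ x := by
      rw [← hB x x, hMx, dotProduct_comm]
    have hCSw : (∑ k', (w k')⁻¹ * ((A *ᵥ y) k' * (A *ᵥ x) k')) ^ 2
        ≤ (∑ k', (w k')⁻¹ * ((A *ᵥ y) k' * (A *ᵥ y) k'))
          * (∑ k', (w k')⁻¹ * ((A *ᵥ x) k' * (A *ᵥ x) k')) := by
      have hcs := Finset.sum_mul_sq_le_sq_mul_sq Finset.univ
        (fun k' => (A *ᵥ y) k' / Real.sqrt (w k'))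
        (fun k' => (A *ᵥ x) k' / Real.sqrt (w k'))
      have e1 : ∀ k' : Fin n, (A *ᵥ y) k' / Real.sqrt (w k') * ((A *ᵥ x) k' / Real.sqrt (w k'))
          = (w k')⁻¹ * ((A *ᵥ y) k' * (A *ᵥ x) k') := by
        intro k'
        rw [div_mul_div_comm, Real.mul_self_sqrt (hw k').le, div_eq_inv_mul]
      have e2 : ∀ k' : Fin n, ((A *ᵥ y) k' / Real.sqrt (w k')) ^ 2
          = (w k')⁻¹ * ((A *ᵥ y) k' * (A *ᵥ y) k') := by
        intro k'
        rw [div_pow, Real.sq_sqrt (hw k').le, div_eq_inv_mul, sq]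
      have e3 : ∀ k' : Fin n, ((A *ᵥ x) k' / Real.sqrt (w k')) ^ 2
          = (w k')⁻¹ * ((A *ᵥ x) k' * (A *ᵥ x) k') := by
        intro k'
        rw [div_pow, Real.sq_sqrt (hw k').le, div_eq_inv_mul, sq]
      calc (∑ k', (w k')⁻¹ * ((A *ᵥ y) k' * (A *ᵥ x) k')) ^ 2
          = (∑ k', (A *ᵥ y) k' / Real.sqrt (w k') * ((A *ᵥ x) k' / Real.sqrt (w k'))) ^ 2 := by
            rw [Finset.sum_congr rfl fun k' _ => e1 k']
        _ ≤ (∑ k', ((A *ᵥ y) k' / Real.sqrt (w k')) ^ 2)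
            * (∑ k', ((A *ᵥ x) k' / Real.sqrt (w k')) ^ 2) := hcs
        _ = _ := by
            rw [Finset.sum_congr rfl fun k' _ => e2 k',
              Finset.sum_congr rfl fun k' _ => e3 k']
    rw [← hS2eq, hqx, ← hw2] at hCSw
    have hqy : w jmin * (∑ k', (w k')⁻¹ * ((A *ᵥ y) k' * (A *ᵥ y) k'))
        ≤ κ * ∑ j, y j ^ 2 := by
      have h1 := hkey2 y
      have h2 := hhiQ y
      have h3 := mul_le_mul_of_nonneg_left h1 (hw jmin).le
      have h4 : w jmin * ((w jmin)⁻¹ * ∑ k', (A *ᵥ y) k' ^ 2)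
          = ∑ k', (A *ᵥ y) k' ^ 2 := by
        rw [← mul_assoc, mul_inv_cancel₀ (hw jmin).ne', one_mul]
      rw [h4] at h3
      linarith
    rw [hl2]
    nlinarith [mul_le_mul_of_nonneg_left hCSw (hw jmin).le,
      mul_le_mul_of_nonneg_right hqy (sq_nonneg (w k)), hS2pos, hw jmin]
  have hmin : (1/κ^2) * ((d:ℝ)/n) ≤ w jmin := by
    have h := hlower jmin
    have h2 := (hrow jmin).1
    have hwm := hw jmin
    have h3 := mul_le_mul_of_nonneg_left h2 hwm.le
    have h5 : w jmin * (1/κ * ((d:ℝ)/n)) ≤ κ * (w jmin)^2 := le_trans h3 h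
    have h6 : 1/κ * ((d:ℝ)/n) ≤ κ * w jmin := by
      have h5' : w jmin * (1/κ * ((d:ℝ)/n)) ≤ w jmin * (κ * w jmin) := by
        nlinarith [h5]
      exact (mul_le_mul_iff_right₀ hwm).mp h5'
    have h7 := mul_le_mul_of_nonneg_left h6 (by positivity : (0:ℝ) ≤ 1/κ)
    have h8 : 1/κ * (κ * w jmin) = w jmin := by field_simp
    have h9 : 1/κ * (1/κ * ((d:ℝ)/n)) = 1/κ^2 * ((d:ℝ)/n) := by ring
    linarith
  exact ⟨le_trans hmin (hjmin' i), le_trans (hjmax' i) hmax⟩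
end

section
/- Let A ∈ ℝ^{n×d} have full column rank, let w ∈ ℝⁿ be strictly positive weights satisfying the ℓ1 Lewis-weight equation w_j² = A_j (AᵀW⁻¹A)⁻¹ A_jᵀ with W = diag(w), let h > 0, and let p ∈ ℝⁿ be positive with (1/γ)·w_j·h ≤ p_j ≤ γ·w_j·h for all j and some γ ≥ 1. Let Ã ∈ ℝ^{N×d} be a matrix each of whose rows is a rescaled row of A: Ãᵢ = (1/p_{σ(i)})·A_{σ(i)} for some map σ : {1,…,N} → {1,…,n}, and suppose Ã has full column rank and (1/κ)·(1/h)·AᵀW⁻¹A ⪯ ÃᵀÃ ⪯ κ·(1/h)·AᵀW⁻¹A for some κ ≥ 1. Then for every row i of Ã, (1/(κγ²))·(1/h) ≤ τᵢ(Ã) ≤ κγ²·(1/h). -/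
open Matrix Finset

/-- The leverage score of row `i` of a matrix `M`: `τᵢ(M) = Mᵢ (MᵀM)⁻¹ Mᵢᵀ`. -/
noncomputable def levScore {n d : ℕ} (M : Matrix (Fin n) (Fin d) ℝ) (i : Fin n) : ℝ :=
  M i ⬝ᵥ ((Mᵀ * M)⁻¹).mulVec (M i)

lemma quad_inv_le {d : ℕ} {P Q : Matrix (Fin d) (Fin d) ℝ}
    (hP : P.PosSemidef) (hPu : IsUnit P) (hQu : IsUnit Q)
    (hPQ : (Q - P).PosSemidef) (x : Fin d → ℝ) :
    x ⬝ᵥ Q⁻¹.mulVec x ≤ x ⬝ᵥ P⁻¹.mulVec x := by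
  set u := P⁻¹ *ᵥ x with hu_def
  set v := Q⁻¹ *ᵥ x with hv_def
  have hu : P *ᵥ u = x := by
    rw [hu_def, Matrix.mulVec_mulVec,
      Matrix.mul_nonsing_inv _ ((Matrix.isUnit_iff_isUnit_det P).mp hPu), Matrix.one_mulVec]
  have hv : Q *ᵥ v = x := by
    rw [hv_def, Matrix.mulVec_mulVec,
      Matrix.mul_nonsing_inv _ ((Matrix.isUnit_iff_isUnit_det Q).mp hQu), Matrix.one_mulVec]
  have hPsym : Pᵀ = P := by
    have := hP.1
    rwa [Matrix.IsHermitian, Matrix.conjTranspose_eq_transpose_of_trivial] at this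
  have h1 : 0 ≤ (u - v) ⬝ᵥ P *ᵥ (u - v) := by simpa using hP.dotProduct_mulVec_nonneg (u - v)
  have h2 : v ⬝ᵥ P *ᵥ v ≤ v ⬝ᵥ Q *ᵥ v := by
    have := hPQ.dotProduct_mulVec_nonneg v
    simp only [star_trivial, Matrix.sub_mulVec, dotProduct_sub] at this
    linarith
  have hPv : u ⬝ᵥ P *ᵥ v = v ⬝ᵥ x := by
    rw [Matrix.dotProduct_mulVec, ← hPsym, Matrix.vecMul_transpose, hu, dotProduct_comm]
  have h1' : 0 ≤ u ⬝ᵥ x - 2 * (v ⬝ᵥ x) + v ⬝ᵥ P *ᵥ v := by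
    have hvPu : v ⬝ᵥ P *ᵥ u = v ⬝ᵥ x := by rw [hu]
    have huPu : u ⬝ᵥ P *ᵥ u = u ⬝ᵥ x := by rw [hu]
    have e : (u - v) ⬝ᵥ P *ᵥ (u - v)
        = u ⬝ᵥ x - 2 * (v ⬝ᵥ x) + v ⬝ᵥ P *ᵥ v := by
      rw [Matrix.mulVec_sub, dotProduct_sub, sub_dotProduct, sub_dotProduct,
        huPu, hvPu, hPv]
      ring
    linarith [e ▸ h1]
  have hvQv : v ⬝ᵥ Q *ᵥ v = v ⬝ᵥ x := by rw [hv]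
  have key : v ⬝ᵥ x ≤ u ⬝ᵥ x := by linarith [hvQv ▸ h2]
  calc x ⬝ᵥ Q⁻¹ *ᵥ x = v ⬝ᵥ x := by rw [← hv_def, dotProduct_comm]
    _ ≤ u ⬝ᵥ x := key
    _ = x ⬝ᵥ P⁻¹ *ᵥ x := by rw [hu_def, dotProduct_comm]

/-- Sampling by (approximate) ℓ1 Lewis weights gives approximately equal leverage
scores: if `w` are the Lewis weights of `A`, `p_j ≈_γ w_j·h`, each row of `Ã` is
`(1/p_{σ(i)})·A_{σ(i)}`, and `ÃᵀÃ ≈_κ (1/h)·AᵀW⁻¹A` in the Loewner order, then every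
leverage score of `Ã` satisfies `(1/(κγ²))·(1/h) ≤ τᵢ(Ã) ≤ κγ²·(1/h)`. -/
theorem stmt16 {n N d : ℕ} (A : Matrix (Fin n) (Fin d) ℝ)
    (hA : IsUnit (Aᵀ * A))
    (w : Fin n → ℝ) (hw : ∀ j, 0 < w j)
    (hlewis : ∀ j, (w j) ^ 2 =
      A j ⬝ᵥ ((Aᵀ * (Matrix.diagonal w)⁻¹ * A)⁻¹).mulVec (A j))
    (h γ κ : ℝ) (hh : 0 < h) (hγ : 1 ≤ γ) (hκ : 1 ≤ κ)
    (p : Fin n → ℝ) (hp : ∀ j, 0 < p j)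
    (hpw : ∀ j, (1 / γ) * (w j * h) ≤ p j ∧ p j ≤ γ * (w j * h))
    (σ : Fin N → Fin n)
    (At : Matrix (Fin N) (Fin d) ℝ)
    (hAtrows : ∀ i, At i = (1 / p (σ i)) • A (σ i))
    (hAtrank : IsUnit (Atᵀ * At))
    (hlo : loewnerLE ((1 / κ) • ((1 / h) • (Aᵀ * (Matrix.diagonal w)⁻¹ * A))) (Atᵀ * At))
    (hhi : loewnerLE (Atᵀ * At) (κ • ((1 / h) • (Aᵀ * (Matrix.diagonal w)⁻¹ * A)))) :
    ∀ i, (1 / (κ * γ ^ 2)) * (1 / h) ≤ levScore At i ∧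
         levScore At i ≤ κ * γ ^ 2 * (1 / h) := by
  have hκ0 : 0 < κ := lt_of_lt_of_le one_pos hκ
  have hγ0 : 0 < γ := lt_of_lt_of_le one_pos hγ
  set C := Aᵀ * (Matrix.diagonal w)⁻¹ * A with hC_def
  have hdiaginv : (Matrix.diagonal w)⁻¹ = Matrix.diagonal (fun j => (w j)⁻¹) := by
    apply Matrix.inv_eq_right_inv
    rw [Matrix.diagonal_mul_diagonal]
    have he : (fun i => w i * (w i)⁻¹) = fun _ => (1:ℝ) :=
      funext fun k => mul_inv_cancel₀ (hw k).ne'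
    rw [he, Matrix.diagonal_one]
  have hquadC : ∀ x : Fin d → ℝ, x ⬝ᵥ C *ᵥ x = ∑ j, (w j)⁻¹ * ((A *ᵥ x) j)^2 := by
    intro x
    rw [hC_def, hdiaginv, ← Matrix.mulVec_mulVec, ← Matrix.mulVec_mulVec,
      Matrix.dotProduct_mulVec, Matrix.vecMul_transpose]
    simp only [dotProduct, Matrix.mulVec_diagonal]
    exact Finset.sum_congr rfl (fun j _ => by ring)
  have hCsym : Cᵀ = C := by
    rw [hC_def, hdiaginv]
    rw [Matrix.transpose_mul, Matrix.transpose_mul, Matrix.transpose_transpose,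
      Matrix.diagonal_transpose, Matrix.mul_assoc]
  have hCpd : C.PosDef := by
    rw [Matrix.posDef_iff_dotProduct_mulVec]
    constructor
    · rw [Matrix.IsHermitian, Matrix.conjTranspose_eq_transpose_of_trivial]
      exact hCsym
    · intro x hx
      simp only [star_trivial]
      rw [hquadC]
      have hAx : A *ᵥ x ≠ 0 := by
        intro hax
        apply hx
        have h0 : (Aᵀ * A) *ᵥ x = 0 := by
          rw [← Matrix.mulVec_mulVec, hax, Matrix.mulVec_zero]
        have h1 := congrArg (fun y => (Aᵀ * A)⁻¹ *ᵥ y) h0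
        simpa [Matrix.mulVec_mulVec,
          Matrix.nonsing_inv_mul _ ((Matrix.isUnit_iff_isUnit_det _).mp hA),
          Matrix.one_mulVec] using h1
      obtain ⟨j, hj⟩ : ∃ j, (A *ᵥ x) j ≠ 0 := by
        by_contra hc
        push_neg at hc
        exact hAx (funext hc)
      apply Finset.sum_pos' (fun i _ => by have := hw i; positivity)
      exact ⟨j, Finset.mem_univ j, by have := hw j; positivity⟩
  have hCunit : IsUnit C := hCpd.isUnit
  have hsmulPSD : ∀ c : ℝ, 0 ≤ c → (c • C).PosSemidef := by
    intro c hc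
    rw [Matrix.posSemidef_iff_dotProduct_mulVec]
    constructor
    · rw [Matrix.IsHermitian, Matrix.conjTranspose_eq_transpose_of_trivial,
        Matrix.transpose_smul, hCsym]
    · intro x
      simp only [star_trivial, Matrix.smul_mulVec, dotProduct_smul, smul_eq_mul]
      have hq := hCpd.posSemidef.dotProduct_mulVec_nonneg x
      simp only [star_trivial] at hq
      positivity
  have hinv_smul : ∀ c : ℝ, c ≠ 0 → (c • C)⁻¹ = c⁻¹ • C⁻¹ := by
    intro c hc
    have : Invertible c := invertibleOfNonzero hc
    rw [Matrix.inv_smul (A := C) c ((Matrix.isUnit_iff_isUnit_det C).mp hCunit),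
      invOf_eq_inv c]
  have hunit_smul : ∀ c : ℝ, c ≠ 0 → IsUnit (c • C) := by
    intro c hc
    rw [Matrix.isUnit_iff_isUnit_det, Matrix.det_smul]
    exact (IsUnit.pow _ (isUnit_iff_ne_zero.mpr hc)).mul
      ((Matrix.isUnit_iff_isUnit_det _).mp hCunit)
  have hSpsd : (Atᵀ * At).PosSemidef := by
    have := Matrix.posSemidef_conjTranspose_mul_self At
    rwa [Matrix.conjTranspose_eq_transpose_of_trivial] at this
  intro i
  set j := σ i with hj_def
  set x := At i with hx_def
  have hpj := hpw j
  have hwj := hw j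
  have hpj0 := hp j
  have hxCinv : x ⬝ᵥ C⁻¹ *ᵥ x = (1 / p j)^2 * (w j)^2 := by
    rw [hx_def, hAtrows i, ← hj_def, smul_dotProduct, Matrix.mulVec_smul, dotProduct_smul,
      ← hlewis j]
    simp only [smul_eq_mul]
    ring
  have hlow : (κ * (1/h))⁻¹ * ((1 / p j)^2 * (w j)^2) ≤ levScore At i := by
    have hQu : IsUnit (κ • ((1/h) • C)) := by
      rw [smul_smul]; exact hunit_smul _ (by positivity)
    have key := quad_inv_le hSpsd hAtrank hQu hhi x
    rw [smul_smul, hinv_smul _ (by positivity), Matrix.smul_mulVec,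
      dotProduct_smul, smul_eq_mul, hxCinv] at key
    exact key
  have hhigh : levScore At i ≤ ((1/κ) * (1/h))⁻¹ * ((1 / p j)^2 * (w j)^2) := by
    have hPu : IsUnit ((1/κ) • ((1/h) • C)) := by
      rw [smul_smul]; exact hunit_smul _ (by positivity)
    have hPpsd : (((1:ℝ)/κ) • ((1/h) • C)).PosSemidef := by
      rw [smul_smul]; exact hsmulPSD _ (by positivity)
    have key := quad_inv_le hPpsd hPu hAtrank hlo x
    rw [smul_smul, hinv_smul _ (by positivity), Matrix.smul_mulVec,
      dotProduct_smul, smul_eq_mul, hxCinv] at key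
    exact key
  have hediv : (1 / p j)^2 * (w j)^2 * h = ((w j)^2 * h) / (p j)^2 := by
    field_simp
  have hlb : 1 / (γ^2 * h) ≤ (1 / p j)^2 * (w j)^2 * h := by
    have hp2 : (p j)^2 ≤ (γ * (w j * h))^2 := pow_le_pow_left₀ hpj0.le hpj.2 2
    rw [hediv, div_le_div_iff₀ (by positivity) (by positivity)]
    nlinarith [hp2]
  have hub : (1 / p j)^2 * (w j)^2 * h ≤ γ^2 / h := by
    have hwh : w j * h ≤ γ * p j := by
      have hm := mul_le_mul_of_nonneg_left hpj.1 hγ0.le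
      rwa [← mul_assoc, mul_one_div, div_self hγ0.ne', one_mul] at hm
    have hp1 : (w j * h)^2 ≤ (γ * p j)^2 := pow_le_pow_left₀ (by positivity) hwh 2
    rw [hediv, div_le_div_iff₀ (by positivity) hh]
    nlinarith [hp1]
  constructor
  · calc (1 / (κ * γ^2)) * (1/h) = (1/κ) * (1/(γ^2 * h)) := by ring
      _ ≤ (1/κ) * ((1 / p j)^2 * (w j)^2 * h) :=
          mul_le_mul_of_nonneg_left hlb (by positivity)
      _ = (κ * (1/h))⁻¹ * ((1 / p j)^2 * (w j)^2) := by
          field_simp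
      _ ≤ levScore At i := hlow
  · calc levScore At i ≤ ((1/κ) * (1/h))⁻¹ * ((1 / p j)^2 * (w j)^2) := hhigh
      _ = κ * ((1 / p j)^2 * (w j)^2 * h) := by
          field_simp
      _ ≤ κ * (γ^2 / h) := mul_le_mul_of_nonneg_left hub hκ0.le
      _ = κ * γ^2 * (1/h) := by ring
end
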